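/- Let μ be a symmetrically and strongly pre-uniform structure on a set X. Then for every V ∈ μ there exists a pseudometric ρ on X that is pre-uniform with respect to μ and satisfies {(x,y) : ρ(x,y) < 1} ⊆ V. -/

import Mathlib

open Set

variable {X : Type*}

/-- The inverse `U⁻¹ = {(y,x) : (x,y) ∈ U}` of a relation on `X`. -/
def preInv (U : Set (X × X)) : Set (X × X) := {p | (p.2, p.1) ∈ U}

/-- The composition `U ∘ V = {(x,y) : ∃ z, (x,z) ∈ U ∧ (z,y) ∈ V}`. -/
def preComp (U V : Set (X × X)) : Set (X × X) :=
  {p | ∃ z, (p.1, z) ∈ U ∧ (z, p.2) ∈ V}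

/-- The ball `U[x] = {y : (x,y) ∈ U}`. -/
def uball (U : Set (X × X)) (x : X) : Set X := {y | (x, y) ∈ U}

/-- A pre-uniformity on `X`: a family `μ` of subsets of `X × X` satisfying (U1)-(U5). -/
structure IsPreUniformity (μ : Set (Set (X × X))) : Prop where
  diag_subset : ∀ U ∈ μ, Set.diagonal X ⊆ U
  inv_mem : ∀ U ∈ μ, preInv U ∈ μ
  comp_mem : ∀ U ∈ μ, ∃ V ∈ μ, ∃ W ∈ μ, preComp V W ⊆ U
  superset_mem : ∀ U ∈ μ, ∀ V : Set (X × X), U ⊆ V → V ∈ μ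
  sInter_eq : ⋂₀ μ = Set.diagonal X

/-- (U2'): every entourage contains a symmetric entourage. -/
def SymmetricallyPreUniform (μ : Set (Set (X × X))) : Prop :=
  ∀ U ∈ μ, ∃ V ∈ μ, V ⊆ U ∧ preInv V = V

/-- (U3'): every entourage `U` admits `V ∈ μ` with `V ∘ V ⊆ U`. -/
def StronglyPreUniform (μ : Set (Set (X × X))) : Prop :=
  ∀ U ∈ μ, ∃ V ∈ μ, preComp V V ⊆ U

/-- The pre-topology `τ(μ)` induced by a pre-uniformity `μ`. -/
def preTop (μ : Set (Set (X × X))) : Set (Set X) :=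
  {G | ∀ x ∈ G, ∃ U ∈ μ, uball U x ⊆ G}

/-- A pre-topology on `X`: a family of subsets covering `X` closed under arbitrary unions. -/
def IsPreTopology (τ : Set (Set X)) : Prop :=
  ⋃₀ τ = Set.univ ∧ ∀ S : Set (Set X), S ⊆ τ → ⋃₀ S ∈ τ

/-- Interior with respect to a pre-topology. -/
def pInterior (τ : Set (Set X)) (A : Set X) : Set X :=
  ⋃₀ {W | W ∈ τ ∧ W ⊆ A}

/-- Closure with respect to a pre-topology: the smallest closed set containing `A`. -/
def pClosure (τ : Set (Set X)) (A : Set X) : Set X :=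
  ⋂₀ {C | A ⊆ C ∧ Cᶜ ∈ τ}

/-- T1 separation for a pre-topology. -/
def IsT1 (τ : Set (Set X)) : Prop :=
  ∀ x y : X, x ≠ y → (∃ V ∈ τ, x ∈ V ∧ y ∉ V) ∧ (∃ W ∈ τ, y ∈ W ∧ x ∉ W)

/-- Complete regularity for a pre-topology: T1, and points can be separated from closed
sets by pre-continuous maps into the unit interval. -/
def IsCompletelyRegular (τ : Set (Set X)) : Prop :=
  IsT1 τ ∧ ∀ (x : X) (C : Set X), Cᶜ ∈ τ → x ∉ C →
    ∃ f : X → unitInterval,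
      (∀ O : Set unitInterval, IsOpen O → f ⁻¹' O ∈ τ) ∧
      f x = 0 ∧ ∀ y ∈ C, f y = 1

/-- A pseudometric on `X`. -/
structure IsPseudometric (ρ : X → X → ℝ) : Prop where
  refl : ∀ x, ρ x x = 0
  symm : ∀ x y, ρ x y = ρ y x
  nonneg : ∀ x y, 0 ≤ ρ x y
  triangle : ∀ x y z, ρ x z ≤ ρ x y + ρ y z

/-- A pseudometric `ρ` is pre-uniform with respect to `μ`. -/
def PreUniformPseudometric (μ : Set (Set (X × X))) (ρ : X → X → ℝ) : Prop :=
  ∀ ε : ℝ, 0 < ε → ∃ V ∈ μ, ∀ x y : X, (x, y) ∈ V → ρ x y < ε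

/-- A cover of `X` which is pre-uniform with respect to `μ`: some `{V[x] : x ∈ X}` refines it. -/
def PreUniformCover (μ : Set (Set (X × X))) (𝒜 : Set (Set X)) : Prop :=
  ⋃₀ 𝒜 = Set.univ ∧ ∃ V ∈ μ, ∀ x : X, ∃ A ∈ 𝒜, uball V x ⊆ A

/-- The star `st(A, ℬ)` of a set `A` with respect to a family `ℬ`. -/
def pStar (A : Set X) (ℬ : Set (Set X)) : Set X :=
  ⋃₀ {B | B ∈ ℬ ∧ (B ∩ A).Nonempty}

/-- The star `st(x, 𝒜)` of a point with respect to a family `𝒜`. -/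
def pStarPt (x : X) (𝒜 : Set (Set X)) : Set X :=
  ⋃₀ {A | A ∈ 𝒜 ∧ x ∈ A}

/-- The entourage `⋃ {A × A : A ∈ 𝒜}` associated with a cover `𝒜`. -/
def coverEnt (𝒜 : Set (Set X)) : Set (X × X) := ⋃ A ∈ 𝒜, A ×ˢ A

/-- The family generated by the entourages of the covers in `𝒪`. -/
def coverUnif (𝒪 : Set (Set (Set X))) : Set (Set (X × X)) :=
  {U | ∃ 𝒜 ∈ 𝒪, coverEnt 𝒜 ⊆ U}

/-- The entourage `U_{i,ρ} = {(x,y) : ρ(x,y) < 2⁻ⁱ}` of a pseudometric. -/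
def pmEnt (ρ : X → X → ℝ) (i : ℕ) : Set (X × X) :=
  {p | ρ p.1 p.2 < (1 / 2 : ℝ) ^ i}

/-- The family generated by the entourages `U_{i,ρ}`, `ρ ∈ 𝒟`, `i ∈ ℕ`. -/
def pmUnif (𝒟 : Set (X → X → ℝ)) : Set (Set (X × X)) :=
  {U | ∃ ρ ∈ 𝒟, ∃ i : ℕ, pmEnt ρ i ⊆ U}

/-- A pre-proximity on `X`: a relation `δ` on subsets of `X` satisfying (PP1)-(PP5). -/
structure IsPreProximity (δ : Set X → Set X → Prop) : Prop where
  symm : ∀ A B, δ A B ↔ δ B A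
  mono : ∀ A B C, δ A B → B ⊆ C → δ A C
  point : ∀ x y : X, δ {x} {y} ↔ x = y
  not_empty_univ : ¬ δ ∅ Set.univ
  sep : ∀ A B, ¬ δ A B → ∃ C : Set X, ¬ δ A C ∧ ¬ δ B Cᶜ

/-- The closure operator `c(A) = {x : {x} δ A}` of a pre-proximity. -/
def proxCl (δ : Set X → Set X → Prop) (A : Set X) : Set X := {x | δ {x} A}

/-- The pre-topology induced by a pre-proximity: `U` is open iff `c(X ∖ U) = X ∖ U`. -/
def proxTop (δ : Set X → Set X → Prop) : Set (Set X) :=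
  {U | proxCl δ Uᶜ = Uᶜ}

/-- `A ≪ B`, i.e. `B` is a `δ`-neighborhood of `A`: `A δ̄ (X ∖ B)`. -/
def deltaNbhd (δ : Set X → Set X → Prop) (A B : Set X) : Prop := ¬ δ A Bᶜ

/-- The pre-proximity induced by a pre-uniformity: `A δ_μ B` iff every entourage meets `A × B`. -/
def unifProx (μ : Set (Set (X × X))) (A B : Set X) : Prop :=
  ∀ V ∈ μ, (V ∩ A ×ˢ B).Nonempty

/-- The family generated by the sets `T(A,B) = (X × X) ∖ (A × B)` with `A δ̄ B`. -/
def proxUnif (δ : Set X → Set X → Prop) : Set (Set (X × X)) :=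
  {U | ∃ A B : Set X, ¬ δ A B ∧ (A ×ˢ B)ᶜ ⊆ U}

/-- A pre-uniformity is totally bounded if every entourage admits a finite dense set. -/
def TotallyBoundedPU (μ : Set (Set (X × X))) : Prop :=
  ∀ U ∈ μ, ∃ A : Set X, A.Finite ∧ ∀ x : X, ∃ y ∈ A, (x, y) ∈ U

theorem statement6 {X : Type*} (μ : Set (Set (X × X))) (hμ : IsPreUniformity μ)
    (hsym : SymmetricallyPreUniform μ) (hstr : StronglyPreUniform μ) :
    ∀ V ∈ μ, ∃ ρ : X → X → ℝ, IsPseudometric ρ ∧ PreUniformPseudometric μ ρ ∧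
      {p : X × X | ρ p.1 p.2 < 1} ⊆ V := by
  intro V hV
  -- Step: every entourage contains a symmetric W with W ∘ W ∘ W ⊆ U
  have key : ∀ U ∈ μ, ∃ W, W ∈ μ ∧ preInv W = W ∧
      preComp (preComp W W) W ⊆ U ∧ W ⊆ U := by
    intro U hU
    obtain ⟨S, hSμ, hSU, _⟩ := hsym U hU
    obtain ⟨W₁, hW₁μ, hW₁⟩ := hstr S hSμ
    obtain ⟨W₂, hW₂μ, hW₂⟩ := hstr W₁ hW₁μ
    obtain ⟨W, hWμ, hWsub, hWsym⟩ := hsym W₂ hW₂μ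
    have hdiag : ∀ T ∈ μ, T ⊆ preComp T T := fun T hT p hp =>
      ⟨p.2, hp, hμ.diag_subset T hT rfl⟩
    have hW₂₁ : W₂ ⊆ W₁ := (hdiag W₂ hW₂μ).trans hW₂
    have hW₁S : W₁ ⊆ S := (hdiag W₁ hW₁μ).trans hW₁
    refine ⟨W, hWμ, hWsym, ?_, ?_⟩
    · rintro ⟨x, y⟩ ⟨z, ⟨w, hxw, hwz⟩, hzy⟩
      have h1 : (x, z) ∈ W₁ := hW₂ ⟨w, hWsub hxw, hWsub hwz⟩
      exact hSU (hW₁ ⟨z, h1, hW₂₁ (hWsub hzy)⟩)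
    · exact hWsub.trans (hW₂₁.trans (hW₁S.trans hSU))
  choose f hfμ hfsym hfcomp hfsub using fun U (h : U ∈ μ) => key U h
  -- the sequence of entourages
  let g : {U // U ∈ μ} → {U // U ∈ μ} := fun U => ⟨f U.1 U.2, hfμ U.1 U.2⟩
  let Us : ℕ → {U // U ∈ μ} := fun n => g^[n + 1] ⟨V, hV⟩
  let U : ℕ → Set (X × X) := fun n => (Us n).1
  have hUμ : ∀ n, U n ∈ μ := fun n => (Us n).2
  have hUsucc : ∀ n, Us (n + 1) = g (Us n) := by
    intro n
    show g^[n + 1 + 1] _ = _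
    rw [Function.iterate_succ_apply']
  have hUsym : ∀ n, preInv (U n) = U n := by
    intro n
    cases n with
    | zero => exact hfsym V hV
    | succ m =>
      have := hUsucc m
      show preInv (Us (m + 1)).1 = (Us (m + 1)).1
      rw [this]
      exact hfsym _ _
  have hUcomp : ∀ n, preComp (preComp (U (n + 1)) (U (n + 1))) (U (n + 1)) ⊆ U n := by
    intro n
    have := hUsucc n
    show preComp (preComp (Us (n + 1)).1 (Us (n + 1)).1) (Us (n + 1)).1 ⊆ (Us n).1
    rw [this]
    exact hfcomp _ _
  have hU0V : U 0 ⊆ V := hfsub V hV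
  have hUdiag : ∀ n, Set.diagonal X ⊆ U n := fun n => hμ.diag_subset _ (hUμ n)
  have hUmono : ∀ n, U (n + 1) ⊆ U n := by
    intro n p hp
    exact hUcomp n ⟨p.2, ⟨p.2, hp, hUdiag _ rfl⟩, hUdiag _ rfl⟩
  have hUanti : ∀ m n, m ≤ n → U n ⊆ U m := by
    intro m n hmn
    induction n with
    | zero => simp_all
    | succ k ih =>
      rcases Nat.lt_or_ge m (k + 1) with h | h
      · exact (hUmono k).trans (ih (Nat.lt_succ_iff.mp h))
      · have : m = k + 1 := le_antisymm hmn h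
        subst this; exact subset_rfl
  -- the pre-distance
  classical
  let d : X → X → NNReal := fun x y =>
    if h : ∃ n, (x, y) ∉ U n then 2 * (1 / 2 : NNReal) ^ (Nat.find h) else 0
  have hpow : ∀ n : ℕ, 2 * (1 / 2 : NNReal) ^ (n + 1) = (1 / 2 : NNReal) ^ n := by
    intro n
    rw [← NNReal.coe_inj]
    push_cast
    rw [pow_succ]
    ring
  have half_lt_one : (1 / 2 : NNReal) < 1 := by
    rw [← NNReal.coe_lt_coe]
    norm_num
  have half_pos : (0 : NNReal) < 1 / 2 := by
    rw [← NNReal.coe_lt_coe]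
    norm_num
  -- characterization : (x,y) ∈ U n ↔ d x y ≤ (1/2)^n
  have hd_le : ∀ x y n, (x, y) ∈ U n → d x y ≤ (1 / 2 : NNReal) ^ n := by
    intro x y n hxy
    show dite _ _ _ ≤ _
    split
    · rename_i h
      have hfind : n + 1 ≤ Nat.find h := by
        rcases Nat.lt_or_ge n (Nat.find h) with h' | h'
        · exact h'
        · exact absurd (hUanti _ _ h' hxy) (Nat.find_spec h)
      calc 2 * (1 / 2 : NNReal) ^ (Nat.find h) ≤ 2 * (1 / 2 : NNReal) ^ (n + 1) :=
            mul_le_mul_right (pow_le_pow_of_le_one (zero_le) half_lt_one.le hfind) 2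
      _ = (1 / 2 : NNReal) ^ n := hpow n
    · exact zero_le
  have hd_ge : ∀ x y n, d x y ≤ (1 / 2 : NNReal) ^ n → (x, y) ∈ U n := by
    intro x y n hle
    by_contra hxy
    have h : ∃ m, (x, y) ∉ U m := ⟨n, hxy⟩
    have hdle : Nat.find h ≤ n := Nat.find_le hxy
    have : d x y = 2 * (1 / 2 : NNReal) ^ (Nat.find h) := dif_pos h
    rw [this] at hle
    have h1 : (1 / 2 : NNReal) ^ n ≤ (1 / 2 : NNReal) ^ (Nat.find h) :=
      pow_le_pow_of_le_one (zero_le) half_lt_one.le hdle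
    have h2 : 2 * (1 / 2 : NNReal) ^ (Nat.find h) ≤ (1 / 2 : NNReal) ^ (Nat.find h) :=
      hle.trans h1
    have hpos : (0 : NNReal) < (1 / 2 : NNReal) ^ (Nat.find h) := pow_pos half_pos _
    exact absurd h2 (not_le.mpr (lt_two_mul_self hpos))
  have hd_self : ∀ x, d x x = 0 := by
    intro x
    show dite _ _ _ = 0
    rw [dif_neg]
    push_neg
    exact fun n => hUdiag n rfl
  have hd_comm : ∀ x y, d x y = d y x := by
    intro x y
    have hmem : ∀ n, ((x, y) ∈ U n ↔ (y, x) ∈ U n) := by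
      intro n
      constructor <;> intro h
      · rw [← hUsym n]; exact h
      · rw [← hUsym n] at h; exact h
    by_cases h : ∃ n, (x, y) ∉ U n
    · have h' : ∃ n, (y, x) ∉ U n := by
        obtain ⟨n, hn⟩ := h
        exact ⟨n, fun hc => hn ((hmem n).mpr hc)⟩
      have hfind : Nat.find h = Nat.find h' := by
        apply le_antisymm
        · exact Nat.find_mono (fun n hn hc => hn ((hmem n).mp hc))
        · exact Nat.find_mono (fun n hn hc => hn ((hmem n).mpr hc))
      show dite _ _ _ = dite _ _ _
      rw [dif_pos h, dif_pos h', hfind]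
    · have h' : ¬ ∃ n, (y, x) ∉ U n := by
        intro hc
        obtain ⟨n, hn⟩ := hc
        exact h ⟨n, fun hxy => hn ((hmem n).mp hxy)⟩
      show dite _ _ _ = dite _ _ _
      rw [dif_neg h, dif_neg h']
  have hd_le_two : ∀ x y, d x y ≤ 2 := by
    intro x y
    show dite _ _ _ ≤ 2
    split
    · rename_i h
      have h1 : (1 / 2 : NNReal) ^ (Nat.find h) ≤ 1 :=
        pow_le_one₀ (zero_le) half_lt_one.le
      calc 2 * (1 / 2 : NNReal) ^ (Nat.find h) ≤ 2 * 1 := mul_le_mul_right h1 2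
        _ = 2 := mul_one 2
    · exact zero_le
  -- the 4-point inequality
  have hd4 : ∀ x₁ x₂ x₃ x₄ : X,
      d x₁ x₄ ≤ 2 * max (d x₁ x₂) (max (d x₂ x₃) (d x₃ x₄)) := by
    intro x₁ x₂ x₃ x₄
    set M := max (d x₁ x₂) (max (d x₂ x₃) (d x₃ x₄)) with hM
    have h12 : d x₁ x₂ ≤ M := le_max_left _ _
    have h23 : d x₂ x₃ ≤ M := le_trans (le_max_left _ _) (le_max_right _ _)
    have h34 : d x₃ x₄ ≤ M := le_trans (le_max_right _ _) (le_max_right _ _)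
    rcases le_or_gt 1 M with hM1 | hM1
    · calc d x₁ x₄ ≤ 2 := hd_le_two _ _
      _ = 2 * 1 := (mul_one 2).symm
      _ ≤ 2 * M := by gcongr
    · -- M < 1; claim: d x₁ x₄ ≤ 2 * M
      -- case M = 0 : everything is in every U n
      rcases eq_or_lt_of_le (zero_le (a := M)) with hM0 | hM0
      · have hall : ∀ n, (x₁, x₄) ∈ U n := by
          intro n
          have h1 := hd_ge x₁ x₂ (n + 1) (by rw [← hM0] at h12; exact h12.trans (zero_le))
          have h2 := hd_ge x₂ x₃ (n + 1) (by rw [← hM0] at h23; exact h23.trans (zero_le))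
          have h3 := hd_ge x₃ x₄ (n + 1) (by rw [← hM0] at h34; exact h34.trans (zero_le))
          exact hUcomp n ⟨x₃, ⟨x₂, h1, h2⟩, h3⟩
        have : d x₁ x₄ = 0 := by
          show dite _ _ _ = 0
          rw [dif_neg]; push_neg; exact hall
        simp [this]
      · -- 0 < M < 1. Find n with (1/2)^(n+1) ≤ M: indeed each d value is 0 or 2*(1/2)^m,
        -- and M is one of the d values, so M = 2*(1/2)^m for some m ≥ 2 (since M < 1).
        -- Simpler: find the largest n with M ≤ (1/2)^n? We use: ∃ n, (1/2)^(n+1) ≤ M < ... 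
        have hform : ∃ m : ℕ, M = 2 * (1 / 2 : NNReal) ^ m := by
          have : ∀ a b : X, d a b ≠ 0 → ∃ m, d a b = 2 * (1 / 2 : NNReal) ^ m := by
            intro a b hab
            show ∃ m, dite _ _ _ = _
            by_cases h : ∃ n, (a, b) ∉ U n
            · exact ⟨Nat.find h, dif_pos h⟩
            · exact absurd ((dif_neg h : d a b = 0)) hab
          rcases max_cases (d x₁ x₂) (max (d x₂ x₃) (d x₃ x₄)) with ⟨he, _⟩ | ⟨he, _⟩
          · exact this x₁ x₂ (by rw [← hM] at he; rw [← he]; exact hM0.ne') |>.imp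
              fun m hm => by rw [hM, he, hm]
          · rw [hM, he]
            rcases max_cases (d x₂ x₃) (d x₃ x₄) with ⟨he2, _⟩ | ⟨he2, _⟩
            · rw [he2]
              exact this x₂ x₃ (by rw [← he2]; rw [hM, he] at hM0; exact hM0.ne')
            · rw [he2]
              exact this x₃ x₄ (by rw [← he2]; rw [hM, he] at hM0; exact hM0.ne')
        obtain ⟨m, hm⟩ := hform
        have hm2 : 2 ≤ m := by
          by_contra hlt
          push_neg at hlt
          have hm1 : m ≤ 1 := by omega
          have hge : (1 : NNReal) ≤ M := by
            rw [hm]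
            calc (1 : NNReal) = (1 / 2 : NNReal) ^ 0 := (pow_zero _).symm
            _ = 2 * (1 / 2 : NNReal) ^ (0 + 1) := (hpow 0).symm
            _ ≤ 2 * (1 / 2 : NNReal) ^ m := by
                exact mul_le_mul_right
                  (pow_le_pow_of_le_one (zero_le) half_lt_one.le (by omega)) 2
          exact absurd hM1 (not_lt.mpr hge)
        -- M = 2*(1/2)^m = (1/2)^(m-1); all pairs in U (m-1); result in U (m-2)
        obtain ⟨k, rfl⟩ : ∃ k, m = k + 2 := ⟨m - 2, by omega⟩
        have hMeq : M = (1 / 2 : NNReal) ^ (k + 1) := hm.trans (hpow (k + 1))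
        have h1 := hd_ge x₁ x₂ (k + 1) (h12.trans_eq hMeq)
        have h2 := hd_ge x₂ x₃ (k + 1) (h23.trans_eq hMeq)
        have h3 := hd_ge x₃ x₄ (k + 1) (h34.trans_eq hMeq)
        have h14 : (x₁, x₄) ∈ U k := hUcomp k ⟨x₃, ⟨x₂, h1, h2⟩, h3⟩
        calc d x₁ x₄ ≤ (1 / 2 : NNReal) ^ k := hd_le _ _ _ h14
        _ = 2 * (1 / 2 : NNReal) ^ (k + 1) := (hpow k).symm
        _ = 2 * M := by rw [hMeq]
  -- assemble the pseudometric
  let ρ : X → X → ℝ := fun x y =>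
    @dist X (@PseudoMetricSpace.toDist X (PseudoMetricSpace.ofPreNNDist d hd_self hd_comm)) x y
  have hρle : ∀ x y, ρ x y ≤ d x y := fun x y =>
    PseudoMetricSpace.dist_ofPreNNDist_le d hd_self hd_comm x y
  have hρge : ∀ x y, (d x y : ℝ) ≤ 2 * ρ x y := fun x y =>
    PseudoMetricSpace.le_two_mul_dist_ofPreNNDist d hd_self hd_comm hd4 x y
  refine ⟨ρ, ⟨?_, ?_, ?_, ?_⟩, ?_, ?_⟩
  · exact fun x => @dist_self X (PseudoMetricSpace.ofPreNNDist d hd_self hd_comm) x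
  · exact fun x y => @dist_comm X (PseudoMetricSpace.ofPreNNDist d hd_self hd_comm) x y
  · exact fun x y => @dist_nonneg X (PseudoMetricSpace.ofPreNNDist d hd_self hd_comm) x y
  · exact fun x y z => @dist_triangle X (PseudoMetricSpace.ofPreNNDist d hd_self hd_comm) x y z
  · -- pre-uniform
    intro ε hε
    obtain ⟨n, hn⟩ := exists_pow_lt_of_lt_one hε (by norm_num : (1 / 2 : ℝ) < 1)
    refine ⟨U n, hUμ n, fun x y hxy => ?_⟩
    calc ρ x y ≤ (d x y : ℝ) := hρle x y
    _ ≤ ((1 / 2 : NNReal) ^ n : NNReal) := by exact_mod_cast hd_le x y n hxy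
    _ = (1 / 2 : ℝ) ^ n := by push_cast; ring
    _ < ε := hn
  · -- ρ < 1 ⇒ ∈ V
    rintro ⟨x, y⟩ hxy
    simp only [Set.mem_setOf_eq] at hxy
    have hd2 : (d x y : ℝ) < 2 := lt_of_le_of_lt (hρge x y) (by linarith)
    have hd1 : d x y ≤ 1 := by
      by_contra hgt
      push_neg at hgt
      -- d x y is 0 or 2 * (1/2)^m; if > 1 then m = 0, i.e. d = 2
      have : d x y = 2 ∨ d x y ≤ 1 := by
        show dite _ _ _ = 2 ∨ dite _ _ _ ≤ 1
        split
        · rename_i h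
          cases Nat.eq_zero_or_pos (Nat.find h) with
          | inl h0 => left; rw [h0, pow_zero, mul_one]
          | inr h0 =>
            right
            calc 2 * (1 / 2 : NNReal) ^ (Nat.find h) ≤ 2 * (1 / 2 : NNReal) ^ (0 + 1) :=
              mul_le_mul_right (pow_le_pow_of_le_one (zero_le) half_lt_one.le h0) 2
            _ = (1 / 2 : NNReal) ^ 0 := hpow 0
            _ = 1 := pow_zero _
        · right; exact zero_le
      rcases this with h | h
      · rw [h] at hd2; norm_num at hd2
      · exact absurd h (not_le.mpr hgt)
    have : (x, y) ∈ U 0 := hd_ge x y 0 (by simpa using hd1)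
    exact hU0V this
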